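/- If X supports a (q,p)-Poincaré inequality within the ball B(x₀,r₀), with constants C_PI and λ, then the completion X̂ supports a (q,p)-Poincaré inequality within the ball B̂(x₀,r₀), with the same constants C_PI and λ. -/

import Mathlib

open Metric MeasureTheory Set Filter UniformSpace
open scoped ENNReal NNReal Topology

noncomputable section

namespace Paper

universe u

/-- A nonconstant compact rectifiable curve in `X`, parameterized by arc length,
regarded as a `1`-Lipschitz map on `[0, len]`. -/
structure Curve (X : Type u) [MetricSpace X] where
  len : ℝ
  len_pos : 0 < len
  toFun : ℝ → X
  lip : LipschitzOnWith 1 toFun (Set.Icc 0 len)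
  nonconst : ∃ t ∈ Set.Icc (0 : ℝ) len, toFun t ≠ toFun 0

variable {X : Type u} [MetricSpace X]

/-- The line integral `∫_γ g ds` of a nonnegative function along a curve. -/
def Curve.lineIntegral (γ : Curve X) (g : X → ℝ≥0∞) : ℝ≥0∞ :=
  ∫⁻ t in Set.Icc (0 : ℝ) γ.len, g (γ.toFun t)

/-- The curve `γ` lies in the set `E`. -/
def Curve.In (γ : Curve X) (E : Set X) : Prop :=
  ∀ t ∈ Set.Icc (0 : ℝ) γ.len, γ.toFun t ∈ E

/-- The upper gradient inequality along the curve `γ`; the left-hand side is `∞`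
whenever one of the endpoint values is `±∞`. -/
def ugIneq (f : X → EReal) (g : X → ℝ≥0∞) (γ : Curve X) : Prop :=
  (f (γ.toFun 0) - f (γ.toFun γ.len)).abs ≤ γ.lineIntegral g

variable [MeasurableSpace X]

/-- `g` is an upper gradient of `f` on `E` (with `E` regarded as a metric space
in its own right). -/
def IsUpperGradOn (f : X → EReal) (g : X → ℝ≥0∞) (E : Set X) : Prop :=
  Measurable (fun x : E => g x) ∧ ∀ γ : Curve X, γ.In E → ugIneq f g γ

/-- The curve family `Γ` has zero `p`-modulus with respect to `μ`. -/
def ZeroMod (μ : Measure X) (p : ℝ) (Γ : Set (Curve X)) : Prop :=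
  ∃ ρ : X → ℝ≥0∞, Measurable ρ ∧ (∫⁻ x, ρ x ^ p ∂μ) < ∞ ∧
    ∀ γ ∈ Γ, γ.lineIntegral ρ = ∞

/-- `g` is a `p`-weak upper gradient of `f` on `E`. -/
def IsWeakUpperGradOn (μ : Measure X) (p : ℝ) (f : X → EReal) (g : X → ℝ≥0∞)
    (E : Set X) : Prop :=
  Measurable (fun x : E => g x) ∧
    ZeroMod (μ.restrict E) p {γ : Curve X | γ.In E ∧ ¬ ugIneq f g γ}

/-- `g` is a (the a.e.-unique) minimal `p`-weak upper gradient of `f` on `E`: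
a locally `L^p` `p`-weak upper gradient of `f` which is a.e. smaller than every
locally `L^p` `p`-weak upper gradient of `f` on `E`. -/
def IsMinimalWUG (μ : Measure X) (p : ℝ) (E : Set X) (f : X → EReal)
    (g : X → ℝ≥0∞) : Prop :=
  IsWeakUpperGradOn μ p f g E ∧
  (∀ x ∈ E, ∃ r > 0, (∫⁻ y in Metric.ball x r ∩ E, g y ^ p ∂μ) < ∞) ∧
  ∀ h : X → ℝ≥0∞, IsWeakUpperGradOn μ p f h E →
    (∀ x ∈ E, ∃ r > 0, (∫⁻ y in Metric.ball x r ∩ E, h y ^ p ∂μ) < ∞) →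
    ∀ᵐ x ∂(μ.restrict E), g x ≤ h x

/-- `f ∈ D^p(E)`: `f` is measurable on `E` and has an upper gradient in `L^p(E)`. -/
def MemDp (μ : Measure X) (p : ℝ) (E : Set X) (f : X → EReal) : Prop :=
  Measurable (fun x : E => f x) ∧
    ∃ g : X → ℝ≥0∞, IsUpperGradOn f g E ∧ (∫⁻ x in E, g x ^ p ∂μ) < ∞

/-- `f ∈ N^{1,p}(E)`. -/
def MemNp (μ : Measure X) (p : ℝ) (E : Set X) (f : X → EReal) : Prop :=
  Measurable (fun x : E => f x) ∧ (∫⁻ x in E, (f x).abs ^ p ∂μ) < ∞ ∧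
    ∃ g : X → ℝ≥0∞, IsUpperGradOn f g E ∧ (∫⁻ x in E, g x ^ p ∂μ) < ∞

/-- `f ∈ N^{1,p}_loc(E)`. -/
def MemNpLoc (μ : Measure X) (p : ℝ) (E : Set X) (f : X → EReal) : Prop :=
  ∀ x ∈ E, ∃ r > 0, MemNp μ p (Metric.ball x r ∩ E) f

/-- `f ∈ D^p_loc(E)`. -/
def MemDpLoc (μ : Measure X) (p : ℝ) (E : Set X) (f : X → EReal) : Prop :=
  ∀ x ∈ E, ∃ r > 0, MemDp μ p (Metric.ball x r ∩ E) f

/-- The `p`-energy `‖f‖_{N^{1,p}(E)}^p`. -/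
def npEnergy (μ : Measure X) (p : ℝ) (E : Set X) (f : X → EReal) : ℝ≥0∞ :=
  (∫⁻ x in E, (f x).abs ^ p ∂μ) +
    ⨅ (g : X → ℝ≥0∞) (_ : IsUpperGradOn f g E), ∫⁻ x in E, g x ^ p ∂μ

/-- The Sobolev capacity `C_p^X(E)`. -/
def capacity (μ : Measure X) (p : ℝ) (E : Set X) : ℝ≥0∞ :=
  ⨅ (f : X → EReal) (_ : MemNp μ p Set.univ f) (_ : ∀ x ∈ E, f x = 1),
    npEnergy μ p Set.univ f

/-- Standing assumption: `0 < μ(B) < ∞` for all balls `B`. -/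
def BallCond (μ : Measure X) : Prop :=
  ∀ (x : X) (r : ℝ), 0 < r → 0 < μ (Metric.ball x r) ∧ μ (Metric.ball x r) < ∞

/-- `μ` is doubling within `B(x₀, r₀)`, with doubling constant `C₀`. -/
def DoublingWithin (μ : Measure X) (C₀ : ℝ≥0) (x₀ : X) (r₀ : ℝ) : Prop :=
  ∀ (x : X) (r : ℝ), 0 < r → Metric.ball x r ⊆ Metric.ball x₀ r₀ →
    μ (Metric.ball x (2 * r)) ≤ (C₀ : ℝ≥0∞) * μ (Metric.ball x r)

/-- `μ` is locally doubling. -/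
def LocallyDoubling (μ : Measure X) : Prop :=
  ∀ x : X, ∃ r > 0, ∃ C₀ : ℝ≥0, DoublingWithin μ C₀ x r

/-- `μ` is semilocally doubling. -/
def SemilocallyDoubling (μ : Measure X) : Prop :=
  ∀ (x : X) (r : ℝ), 0 < r → ∃ C₀ : ℝ≥0, DoublingWithin μ C₀ x r

/-- `μ` is globally doubling, with doubling constant `C₀`. -/
def GloballyDoubling (μ : Measure X) (C₀ : ℝ≥0) : Prop :=
  ∀ (x : X) (r : ℝ), 0 < r → DoublingWithin μ C₀ x r

/-- Integral average of a nonnegative function over a set. -/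
def avg (μ : Measure X) (s : Set X) (h : X → ℝ≥0∞) : ℝ≥0∞ :=
  (∫⁻ x in s, h x ∂μ) / μ s

/-- Integral average of a real-valued function over a set. -/
def ravg (μ : Measure X) (s : Set X) (u : X → ℝ) : ℝ := ⨍ x in s, u x ∂μ

/-- The `(q,p)`-Poincaré inequality holds within `B(x₀, r₀)`, with constants
`C` and dilation `lam`. -/
def PoincareWithin (μ : Measure X) (q p C lam : ℝ) (x₀ : X) (r₀ : ℝ) : Prop :=
  ∀ (x : X) (r : ℝ), 0 < r → Metric.ball x r ⊆ Metric.ball x₀ r₀ →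
    ∀ (u : X → ℝ) (g : X → ℝ≥0∞),
      IntegrableOn u (Metric.ball x (lam * r)) μ →
      IsUpperGradOn (fun y => (u y : EReal)) g (Metric.ball x (lam * r)) →
      (avg μ (Metric.ball x r)
          fun y => ENNReal.ofReal |u y - ravg μ (Metric.ball x r) u| ^ q) ^ (1 / q)
        ≤ ENNReal.ofReal (C * r) *
            (avg μ (Metric.ball x (lam * r)) fun y => g y ^ p) ^ (1 / p)

/-- `X` supports a local `(q,p)`-Poincaré inequality. -/
def LocalPoincare (μ : Measure X) (q p : ℝ) : Prop :=
  ∀ x : X, ∃ r > 0, ∃ C > 0, ∃ lam ≥ (1 : ℝ), PoincareWithin μ q p C lam x r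

/-- `X` supports a semilocal `(q,p)`-Poincaré inequality. -/
def SemilocalPoincare (μ : Measure X) (q p : ℝ) : Prop :=
  ∀ (x : X) (r : ℝ), 0 < r → ∃ C > 0, ∃ lam ≥ (1 : ℝ), PoincareWithin μ q p C lam x r

/-- `X` supports a global `(q,p)`-Poincaré inequality with constants `C`, `lam`. -/
def GlobalPoincare (μ : Measure X) (q p C lam : ℝ) : Prop :=
  ∀ (x : X) (r : ℝ), 0 < r → PoincareWithin μ q p C lam x r

/-- `G` is `p`-path open: for `p`-a.e. curve `γ`, the set `γ⁻¹(G)` is relatively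
open in `[0, l_γ]`. -/
def PPathOpen (μ : Measure X) (p : ℝ) (G : Set X) : Prop :=
  ZeroMod μ p {γ : Curve X | ¬ ∃ U : Set ℝ, IsOpen U ∧
    γ.toFun ⁻¹' G ∩ Set.Icc 0 γ.len = U ∩ Set.Icc 0 γ.len}

/-- `G` is `p`-path almost open: for `p`-a.e. curve `γ`, the set `γ⁻¹(G)` is the
union of a relatively open subset of `[0, l_γ]` and a set of `1`-dimensional
Hausdorff (i.e. Lebesgue) measure zero. -/
def PPathAlmostOpen (μ : Measure X) (p : ℝ) (G : Set X) : Prop :=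
  ZeroMod μ p {γ : Curve X | ¬ ∃ U Z : Set ℝ, IsOpen U ∧ volume Z = 0 ∧
    Z ⊆ Set.Icc 0 γ.len ∧
    γ.toFun ⁻¹' G ∩ Set.Icc 0 γ.len = (U ∩ Set.Icc 0 γ.len) ∪ Z}

/-- `x` is an `L^p`-Lebesgue point of `u`. -/
def LebPoint (μ : Measure X) (p : ℝ) (u : X → EReal) (x : X) : Prop :=
  Tendsto (fun r : ℝ => avg μ (Metric.ball x r) fun y => ((u y - u x).abs) ^ p)
    (𝓝[>] (0 : ℝ)) (𝓝 0)

/-- `u` is quasicontinuous on `X`. -/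
def Quasicontinuous (μ : Measure X) (p : ℝ) (u : X → EReal) : Prop :=
  ∀ ε : ℝ≥0∞, 0 < ε → ∃ G : Set X, IsOpen G ∧ capacity μ p G < ε ∧
    (∀ x, x ∉ G → u x ≠ ⊤ ∧ u x ≠ ⊥) ∧ ContinuousOn u Gᶜ

/-- Positive distance between two sets (vacuously true if `E = ∅`). -/
def distPos (G E : Set X) : Prop :=
  ∃ δ : ℝ, 0 < δ ∧ ∀ x ∈ G, ∀ y ∈ E, δ ≤ dist x y

/-- The family `G_dist(Ω)` of bounded open `G ⊆ Ω` with `dist(G, X∖Ω) > 0`. -/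
def Gdist (Ω : Set X) : Set (Set X) :=
  {G | IsOpen G ∧ Bornology.IsBounded G ∧ G ⊆ Ω ∧ distPos G Ωᶜ}

/-- `φ ∈ N^{1,p}_0(G)` (extended by zero outside `G`). -/
def MemN0 (μ : Measure X) (p : ℝ) (G : Set X) (φ : X → EReal) : Prop :=
  MemNp μ p Set.univ φ ∧ ∀ x, x ∉ G → φ x = 0

/-- `φ ∈ N^{1,p}_{0,dist}(Ω)`: the closure in `N^{1,p}(X)` of the functions
vanishing outside some `G ∈ G_dist(Ω)`. -/
def MemN0dist (μ : Measure X) (p : ℝ) (Ω : Set X) (φ : X → EReal) : Prop :=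
  MemNp μ p Set.univ φ ∧
    ∀ ε : ℝ≥0∞, 0 < ε → ∃ ψ : X → EReal, (∃ G ∈ Gdist Ω, MemN0 μ p G ψ) ∧
      npEnergy μ p Set.univ (fun x => φ x - ψ x) < ε

/-- `u` is a `Q`-quasiminimizer in `Ω`, tested by `φ ∈ N^{1,p}_{0,dist}(Ω)`. -/
def QuasiMinimizerDist (μ : Measure X) (p Q : ℝ) (Ω : Set X) (u : X → EReal) : Prop :=
  ∀ φ : X → EReal, MemN0dist μ p Ω φ →
    ∀ gu gv : X → ℝ≥0∞, IsMinimalWUG μ p Ω u gu →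
      IsMinimalWUG μ p Ω (fun x => u x + φ x) gv →
      (∫⁻ x in {x ∈ Ω | φ x ≠ 0}, gu x ^ p ∂μ) ≤
        ENNReal.ofReal Q * ∫⁻ x in {x ∈ Ω | φ x ≠ 0}, gv x ^ p ∂μ

/-- `u` is a `Q`-quasisuperminimizer in `Ω`, tested by nonnegative
`φ ∈ N^{1,p}_{0,dist}(Ω)`. -/
def QuasiSuperminimizerDist (μ : Measure X) (p Q : ℝ) (Ω : Set X) (u : X → EReal) : Prop :=
  ∀ φ : X → EReal, MemN0dist μ p Ω φ → (∀ x, 0 ≤ φ x) →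
    ∀ gu gv : X → ℝ≥0∞, IsMinimalWUG μ p Ω u gu →
      IsMinimalWUG μ p Ω (fun x => u x + φ x) gv →
      (∫⁻ x in {x ∈ Ω | φ x ≠ 0}, gu x ^ p ∂μ) ≤
        ENNReal.ofReal Q * ∫⁻ x in {x ∈ Ω | φ x ≠ 0}, gv x ^ p ∂μ

/-- `ess liminf_{y → x} v(y)` (with respect to `μ`). -/
def essLiminfAt (μ : Measure X) (v : X → EReal) (x : X) : EReal :=
  ⨆ (r : ℝ) (_ : 0 < r), essInf v (μ.restrict (Metric.ball x r))

/-- `v` is lsc-regularized on `Ω`. -/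
def LscRegularizedOn (μ : Measure X) (v : X → EReal) (Ω : Set X) : Prop :=
  ∀ x ∈ Ω, v x = essLiminfAt (μ.restrict Ω) v x

/-- The nonnegative part of an extended real, as an element of `ℝ≥0∞`. -/
def erealPos (x : EReal) : ℝ≥0∞ := if x = ⊤ then ⊤ else ENNReal.ofReal x.toReal

/-- The integral average `⨍_S u dμ` of an `ℝ̄`-valued function. -/
def erealAvg (μ : Measure X) (S : Set X) (u : X → EReal) : EReal :=
  (((∫⁻ x in S, erealPos (u x) ∂μ) / μ S : ℝ≥0∞) : EReal) -
    (((∫⁻ x in S, erealPos (-(u x)) ∂μ) / μ S : ℝ≥0∞) : EReal)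

/-- `Ω^∧ = X̂ ∖ cl_{X̂}(X ∖ Ω)`, the largest open subset of the completion `X̂`
with `Ω^∧ ∩ X = Ω`. -/
def hatSet (Ω : Set X) : Set (Completion X) :=
  (closure (((↑) : X → Completion X) '' Ωᶜ))ᶜ

/-- The function `x ↦ limsup_{r → 0} ⨍_{B̂(x,r) ∩ X} u dμ` on the completion. -/
def hatLimsupExt (μ : Measure X) (u : X → EReal) : Completion X → EReal :=
  fun x => limsup
    (fun r : ℝ => erealAvg μ (((↑) : X → Completion X) ⁻¹' Metric.ball x r) u)
    (𝓝[>] (0 : ℝ))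


set_option maxHeartbeats 1000000 in
/-- If `X` supports a `(q,p)`-Poincaré inequality within the ball
`B(x₀,r₀)`, with constants `C_PI` and `λ`, then the completion `X̂` supports a
`(q,p)`-Poincaré inequality within the ball `B̂(x₀,r₀)`, with the same constants. -/
theorem statement3 {X : Type u} [MetricSpace X] [MeasurableSpace X] [BorelSpace X]
    [MeasurableSpace (Completion X)] [BorelSpace (Completion X)]
    (μ : Measure X) (hμ : BallCond μ)
    (q p CPI lam : ℝ) (hq : 1 ≤ q) (hp : 1 ≤ p) (hCPI : 0 < CPI) (hlam : 1 ≤ lam)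
    (x₀ : X) (r₀ : ℝ) (hr₀ : 0 < r₀)
    (h : PoincareWithin μ q p CPI lam x₀ r₀) :
    PoincareWithin (μ.map ((↑) : X → Completion X)) q p CPI lam
      (x₀ : Completion X) r₀ := by
  classical
  intro xh r hr hsub u g hu hg
  set ι : X → Completion X := ((↑) : X → Completion X) with hιdef
  have hiso : Isometry ι := UniformSpace.Completion.coe_isometry
  have hmι : Measurable ι := (UniformSpace.Completion.continuous_coe X).measurable
  have hq0 : (0:ℝ) < q := lt_of_lt_of_le one_pos hq
  have hp0 : (0:ℝ) < p := lt_of_lt_of_le one_pos hp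
  have hlam0 : (0:ℝ) < lam := lt_of_lt_of_le one_pos hlam
  have hrle : r ≤ lam * r := by nlinarith
  -- the approximating sequence of radii
  set δ : ℕ → ℝ := fun n => r / (((n:ℝ) + 2) * (8 * lam * lam)) with hδdef
  have hδpos : ∀ n, 0 < δ n := fun n => by
    have : (0:ℝ) < ((n:ℝ) + 2) * (8 * lam * lam) := by positivity
    exact div_pos hr this
  have hδanti : Antitone δ := by
    intro m n hmn
    have h1 : (0:ℝ) < ((m:ℝ) + 2) * (8 * lam * lam) := by positivity
    have h2 : ((m:ℝ) + 2) * (8 * lam * lam) ≤ ((n:ℝ) + 2) * (8 * lam * lam) := by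
      have : (m:ℝ) ≤ (n:ℝ) := by exact_mod_cast hmn
      nlinarith
    exact div_le_div_of_nonneg_left hr.le h1 h2
  have hδ0 : Tendsto δ atTop (𝓝 0) := by
    have h1 : Tendsto (fun n : ℕ => ((n:ℝ) + 2)) atTop atTop :=
      tendsto_atTop_add_const_right _ 2 tendsto_natCast_atTop_atTop
    have h2 : Tendsto (fun n : ℕ => ((n:ℝ) + 2) * (8 * lam * lam)) atTop atTop :=
      h1.atTop_mul_const (by positivity)
    have h3 : Tendsto (fun n : ℕ => (((n:ℝ) + 2) * (8 * lam * lam))⁻¹) atTop (𝓝 0) :=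
      h2.inv_tendsto_atTop
    have h4 := h3.const_mul r
    simpa [hδdef, div_eq_mul_inv] using h4
  have hδ8 : ∀ n, δ n * (8 * lam * lam) ≤ r := by
    intro n
    have hd : (0:ℝ) < ((n:ℝ) + 2) * (8 * lam * lam) := by positivity
    rw [hδdef]
    rw [div_mul_eq_mul_div, div_le_iff₀ hd]
    have hn : (0:ℝ) ≤ (n:ℝ) := Nat.cast_nonneg n
    nlinarith [mul_nonneg (mul_nonneg hr.le (by positivity : (0:ℝ) ≤ 8 * lam * lam)) hn]
  -- approximating centers
  have hex : ∀ n : ℕ, ∃ y : X, dist xh (ι y) < δ n := fun n =>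
    UniformSpace.Completion.denseRange_coe.exists_dist_lt xh (hδpos n)
  choose xs hxs using hex
  set s : ℕ → ℝ := fun n => r - 2 * lam * δ n with hsdef
  set t : ℕ → ℝ := fun n => r - (2 * lam + 1) * δ n with htdef
  set w : ℕ → ℝ := fun n => lam * r - (2 * lam * lam + 1) * δ n with hwdef
  have hspos : ∀ n, 0 < s n := by
    intro n
    have h1 := hδ8 n; have h2 := hδpos n
    simp only [hsdef]
    nlinarith [mul_pos hlam0 h2, mul_pos (mul_pos hlam0 hlam0) h2]
  have hsδ : ∀ n, s n + δ n ≤ r := by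
    intro n; have h2 := hδpos n; simp only [hsdef]; nlinarith
  have hlsδ : ∀ n, lam * s n + δ n ≤ lam * r := by
    intro n; have h2 := hδpos n
    have h3 : δ n * 1 ≤ δ n * (2 * lam * lam) :=
      mul_le_mul_of_nonneg_left (by nlinarith) h2.le
    simp only [hsdef]
    nlinarith [h3]
  have htδ : ∀ n, t n + δ n = s n := by intro n; simp only [htdef, hsdef]; ring
  have hwδ : ∀ n, w n + δ n = lam * s n := by intro n; simp only [hwdef, hsdef]; ring
  have htle : ∀ n, t n ≤ r := by
    intro n; have h2 := hδpos n; simp only [htdef]; nlinarith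
  have hwle : ∀ n, w n ≤ lam * r := by
    intro n; have h2 := hδpos n; simp only [hwdef]
    nlinarith [mul_pos (mul_pos hlam0 hlam0) h2]
  have htmono : Monotone t := by
    intro m n hmn
    have := hδanti hmn
    simp only [htdef]
    nlinarith
  have hwmono : Monotone w := by
    intro m n hmn
    have := hδanti hmn
    simp only [hwdef]
    nlinarith [mul_pos hlam0 hlam0]
  have hstendsto : Tendsto s atTop (𝓝 r) := by
    have := tendsto_const_nhds.sub (hδ0.const_mul (2 * lam)) (f := fun _ : ℕ => r)
    simpa [hsdef] using this
  have httendsto : Tendsto t atTop (𝓝 r) := by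
    have := tendsto_const_nhds.sub (hδ0.const_mul (2 * lam + 1)) (f := fun _ : ℕ => r)
    simpa [htdef] using this
  have hwtendsto : Tendsto w atTop (𝓝 (lam * r)) := by
    have := tendsto_const_nhds.sub (hδ0.const_mul (2 * lam * lam + 1)) (f := fun _ : ℕ => lam * r)
    simpa [hwdef] using this
  -- the sets
  set B : ℕ → Set X := fun n => Metric.ball (xs n) (s n) with hBdef
  set LB : ℕ → Set X := fun n => Metric.ball (xs n) (lam * s n) with hLBdef
  set T : ℕ → Set X := fun n => ι ⁻¹' Metric.ball xh (t n) with hTdef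
  set S : ℕ → Set X := fun n => ι ⁻¹' Metric.ball xh (w n) with hSdef
  set H : Set X := ι ⁻¹' Metric.ball xh r with hHdef
  set HL : Set X := ι ⁻¹' Metric.ball xh (lam * r) with hHLdef
  have hdist1 : ∀ (y : X) (n : ℕ), dist (ι y) xh ≤ dist y (xs n) + δ n := by
    intro y n
    have h1 : dist (ι y) xh ≤ dist (ι y) (ι (xs n)) + dist (ι (xs n)) xh := dist_triangle _ _ _
    rw [hiso.dist_eq] at h1
    have h2 : dist (ι (xs n)) xh < δ n := by rw [dist_comm]; exact hxs n
    linarith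
  have hdist2 : ∀ (y : X) (n : ℕ), dist y (xs n) ≤ dist (ι y) xh + δ n := by
    intro y n
    have h1 : dist (ι y) (ι (xs n)) ≤ dist (ι y) xh + dist xh (ι (xs n)) := dist_triangle _ _ _
    rw [hiso.dist_eq] at h1
    have h2 := hxs n
    linarith
  have hBH : ∀ n, B n ⊆ H := by
    intro n y hy
    have hy' : dist y (xs n) < s n := Metric.mem_ball.mp hy
    have := hdist1 y n
    have := hsδ n
    exact Metric.mem_ball.mpr (by simp only [hHdef] at *; linarith)
  have hLBHL : ∀ n, LB n ⊆ HL := by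
    intro n y hy
    have hy' : dist y (xs n) < lam * s n := Metric.mem_ball.mp hy
    have := hdist1 y n
    have := hlsδ n
    exact Metric.mem_ball.mpr (by linarith)
  have hTB : ∀ n, T n ⊆ B n := by
    intro n y hy
    have hy' : dist (ι y) xh < t n := Metric.mem_ball.mp hy
    have := hdist2 y n
    have := htδ n
    exact Metric.mem_ball.mpr (by linarith)
  have hSLB : ∀ n, S n ⊆ LB n := by
    intro n y hy
    have hy' : dist (ι y) xh < w n := Metric.mem_ball.mp hy
    have := hdist2 y n
    have := hwδ n
    exact Metric.mem_ball.mpr (by linarith)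
  have hHHL : H ⊆ HL := Set.preimage_mono (Metric.ball_subset_ball hrle)
  have hB0 : ∀ n, B n ⊆ Metric.ball x₀ r₀ := by
    intro n y hy
    have h1 : ι y ∈ Metric.ball xh r := hBH n hy
    have h2 : ι y ∈ Metric.ball (ι x₀) r₀ := hsub h1
    have h3 : dist (ι y) (ι x₀) < r₀ := Metric.mem_ball.mp h2
    rw [hiso.dist_eq] at h3
    exact Metric.mem_ball.mpr h3
  have hUT : (⋃ n, T n) = H := by
    apply Set.Subset.antisymm
    · exact Set.iUnion_subset fun n =>
        Set.preimage_mono (Metric.ball_subset_ball (htle n))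
    · intro y hy
      have hd : dist (ι y) xh < r := Metric.mem_ball.mp hy
      obtain ⟨n, hn⟩ := (httendsto.eventually (eventually_gt_nhds hd)).exists
      exact Set.mem_iUnion.mpr ⟨n, Metric.mem_ball.mpr hn⟩
  have hUS : (⋃ n, S n) = HL := by
    apply Set.Subset.antisymm
    · exact Set.iUnion_subset fun n =>
        Set.preimage_mono (Metric.ball_subset_ball (hwle n))
    · intro y hy
      have hd : dist (ι y) xh < lam * r := Metric.mem_ball.mp hy
      obtain ⟨n, hn⟩ := (hwtendsto.eventually (eventually_gt_nhds hd)).exists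
      exact Set.mem_iUnion.mpr ⟨n, Metric.mem_ball.mpr hn⟩
  -- measurability
  have hmeasB : ∀ n, MeasurableSet (B n) := fun n => measurableSet_ball
  have hmeasT : ∀ n, MeasurableSet (T n) := fun n => hmι measurableSet_ball
  have hmeasH : MeasurableSet H := hmι measurableSet_ball
  have hmeasHL : MeasurableSet HL := hmι measurableSet_ball
  -- measure facts
  have hmap : ∀ (z : Completion X) (ρ : ℝ),
      (μ.map ι) (Metric.ball z ρ) = μ (ι ⁻¹' Metric.ball z ρ) := fun z ρ =>
    Measure.map_apply hmι measurableSet_ball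
  have hHLsub : HL ⊆ Metric.ball (xs 0) (lam * r + δ 0) := by
    intro y hy
    have hy' : dist (ι y) xh < lam * r := Metric.mem_ball.mp hy
    have := hdist2 y 0
    exact Metric.mem_ball.mpr (by linarith)
  have hMfin : μ HL < ⊤ :=
    lt_of_le_of_lt (measure_mono hHLsub)
      (hμ (xs 0) (lam * r + δ 0) (by positivity)).2
  have hmHfin : μ H < ⊤ := lt_of_le_of_lt (measure_mono hHHL) hMfin
  have hmHpos : 0 < μ H :=
    lt_of_lt_of_le (hμ (xs 0) (s 0) (hspos 0)).1 (measure_mono (hBH 0))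
  have hMpos : 0 < μ HL := lt_of_lt_of_le hmHpos (measure_mono hHHL)
  -- measure convergence
  have hTmono : Monotone T := fun m n hmn =>
    Set.preimage_mono (Metric.ball_subset_ball (htmono hmn))
  have hSmono : Monotone S := fun m n hmn =>
    Set.preimage_mono (Metric.ball_subset_ball (hwmono hmn))
  have hmuT : Tendsto (fun n => μ (T n)) atTop (𝓝 (μ H)) := by
    have := tendsto_measure_iUnion_atTop (μ := μ) hTmono
    rw [hUT] at this
    exact this
  have hmuS : Tendsto (fun n => μ (S n)) atTop (𝓝 (μ HL)) := by
    have := tendsto_measure_iUnion_atTop (μ := μ) hSmono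
    rw [hUS] at this
    exact this
  have hmuB : Tendsto (fun n => μ (B n)) atTop (𝓝 (μ H)) :=
    tendsto_of_tendsto_of_tendsto_of_le_of_le hmuT tendsto_const_nhds
      (fun n => measure_mono (hTB n)) (fun n => measure_mono (hBH n))
  -- transfer of u
  set ub : X → ℝ := fun y => u (ι y) with hubdef
  have hrmap : ∀ ρ : ℝ, (μ.map ι).restrict (Metric.ball xh ρ) =
      (μ.restrict (ι ⁻¹' Metric.ball xh ρ)).map ι := fun ρ =>
    Measure.restrict_map hmι measurableSet_ball
  have huasm : AEStronglyMeasurable u ((μ.restrict HL).map ι) := by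
    rw [← hrmap]; exact hu.1
  have huL : IntegrableOn ub HL μ := by
    have h1 : Integrable u ((μ.restrict HL).map ι) := by
      rw [← hrmap]; exact hu
    exact (integrable_map_measure huasm hmι.aemeasurable).mp h1
  have huH : IntegrableOn ub H μ := huL.mono_set hHHL
  -- transfer of g
  set gb : X → ℝ≥0∞ := fun y => g (ι y) with hgbdef
  have hgm := hg.1
  set ge : Completion X → ℝ≥0∞ :=
    Function.extend (Subtype.val : (Metric.ball xh (lam * r) : Set (Completion X)) → Completion X)
      (fun z => g z) (fun _ => 0) with hgedef
  have hge_meas : Measurable ge :=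
    (MeasurableEmbedding.subtype_coe measurableSet_ball).measurable_extend hgm measurable_const
  have hge_eq : ∀ z ∈ Metric.ball xh (lam * r), ge z = g z := by
    intro z hz
    have h1 := Subtype.val_injective.extend_apply
      (fun z : (Metric.ball xh (lam * r) : Set (Completion X)) => g (z : Completion X))
      (fun _ => 0) (⟨z, hz⟩ : (Metric.ball xh (lam * r) : Set (Completion X)))
    simpa [hgedef] using h1
  have hgp_aem : AEMeasurable (fun z => g z ^ p)
      ((μ.map ι).restrict (Metric.ball xh (lam * r))) := by
    have hm : Measurable fun z => ge z ^ p :=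
      ENNReal.continuous_rpow_const.measurable.comp hge_meas
    refine hm.aemeasurable.congr ?_
    exact ae_restrict_of_forall_mem measurableSet_ball fun z hz => by
      simp only [hge_eq z hz]
  set Ix : ℝ≥0∞ := ∫⁻ y in HL, gb y ^ p ∂μ with hIxdef
  have hIx : (∫⁻ z in Metric.ball xh (lam * r), g z ^ p ∂(μ.map ι)) = Ix := by
    rw [hrmap, lintegral_map' (by rw [← hrmap]; exact hgp_aem) hmι.aemeasurable]
  -- the Poincaré inequality for the approximating balls
  have hPI : ∀ n,
      (avg μ (B n) fun y => ENNReal.ofReal |ub y - ravg μ (B n) ub| ^ q) ^ (1/q) ≤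
        ENNReal.ofReal (CPI * s n) * (avg μ (LB n) fun y => gb y ^ p) ^ (1/p) := by
    intro n
    have hint : IntegrableOn ub (Metric.ball (xs n) (lam * s n)) μ :=
      huL.mono_set (hLBHL n)
    have hug : IsUpperGradOn (fun y => ((ub y : ℝ) : EReal)) gb
        (Metric.ball (xs n) (lam * s n)) := by
      constructor
      · have he : Measurable (fun y : (Metric.ball (xs n) (lam * s n) : Set X) =>
            (⟨ι y, hLBHL n y.2⟩ : (Metric.ball xh (lam * r) : Set (Completion X)))) :=
          (hmι.comp measurable_subtype_coe).subtype_mk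
        exact hg.1.comp he
      · intro γ hγ
        have hγin : ∀ t' ∈ Set.Icc (0:ℝ) γ.len, ι (γ.toFun t') ∈ Metric.ball xh (lam * r) :=
          fun t' ht' => hLBHL n (hγ t' ht')
        obtain ⟨t', ht', hne⟩ := γ.nonconst
        exact hg.2
          { len := γ.len
            len_pos := γ.len_pos
            toFun := fun t' => ι (γ.toFun t')
            lip := by simpa [Function.comp_def] using hiso.lipschitz.comp_lipschitzOnWith γ.lip
            nonconst := ⟨t', ht', fun hc => hne (hiso.injective hc)⟩ } hγin
    exact h (xs n) (s n) (hspos n) (hB0 n) ub gb hint hug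
  -- the limit of the averages
  set ch : ℝ := ravg (μ.map ι) (Metric.ball xh r) u with hchdef
  have huball : IntegrableOn u (Metric.ball xh r) (μ.map ι) :=
    hu.mono_set (Metric.ball_subset_ball hrle)
  have hintH : (∫ z in Metric.ball xh r, u z ∂(μ.map ι)) = ∫ y in H, ub y ∂μ := by
    rw [hrmap r, integral_map hmι.aemeasurable (by rw [← hrmap r]; exact huball.1)]
  have hch : ch = (μ H).toReal⁻¹ * ∫ y in H, ub y ∂μ := by
    rw [hchdef, ravg, setAverage_eq, smul_eq_mul, measureReal_def, hmap xh r, hintH]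
  have hIn : Tendsto (fun n => ∫ y in B n, ub y ∂μ) atTop (𝓝 (∫ y in H, ub y ∂μ)) := by
    have habs : IntegrableOn (fun y => |ub y|) H μ := huH.abs
    have hK : Tendsto (fun n => ∫ y in T n, |ub y| ∂μ) atTop (𝓝 (∫ y in H, |ub y| ∂μ)) := by
      have := tendsto_setIntegral_of_monotone hmeasT hTmono (by rw [hUT]; exact habs)
      rw [hUT] at this
      exact this
    have hbound : ∀ n, dist (∫ y in B n, ub y ∂μ) (∫ y in H, ub y ∂μ) ≤
        (∫ y in H, |ub y| ∂μ) - ∫ y in T n, |ub y| ∂μ := by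
      intro n
      have hsplitB : (∫ y in H, ub y ∂μ) =
          (∫ y in B n, ub y ∂μ) + ∫ y in H \ B n, ub y ∂μ := by
        rw [← setIntegral_union Set.disjoint_sdiff_right (hmeasH.diff (hmeasB n))
          (huH.mono_set (hBH n)) (huH.mono_set Set.diff_subset),
          Set.union_diff_cancel (hBH n)]
      have hsplitT : (∫ y in H, |ub y| ∂μ) =
          (∫ y in T n, |ub y| ∂μ) + ∫ y in H \ T n, |ub y| ∂μ := by
        rw [← setIntegral_union Set.disjoint_sdiff_right (hmeasH.diff (hmeasT n))
          (habs.mono_set (fun y hy => hBH n (hTB n hy))) (habs.mono_set Set.diff_subset),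
          Set.union_diff_cancel (fun y hy => hBH n (hTB n hy))]
      have h1 : |∫ y in H \ B n, ub y ∂μ| ≤ ∫ y in H \ B n, |ub y| ∂μ := by
        simpa [Real.norm_eq_abs] using
          norm_integral_le_integral_norm (μ := μ.restrict (H \ B n)) ub
      have h2 : (∫ y in H \ B n, |ub y| ∂μ) ≤ ∫ y in H \ T n, |ub y| ∂μ :=
        setIntegral_mono_set (habs.mono_set Set.diff_subset)
          (Filter.Eventually.of_forall fun y => abs_nonneg _)
          ((Set.diff_subset_diff_right (hTB n)).eventuallyLE
            : (H \ B n : Set X) ≤ᶠ[ae μ] (H \ T n : Set X))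
      rw [Real.dist_eq, abs_sub_comm]
      have : (∫ y in H, ub y ∂μ) - (∫ y in B n, ub y ∂μ) = ∫ y in H \ B n, ub y ∂μ := by
        linarith [hsplitB]
      rw [this]
      linarith [hsplitT, h1, h2]
    refine tendsto_iff_dist_tendsto_zero.mpr
      (squeeze_zero (fun n => dist_nonneg) hbound ?_)
    have := tendsto_const_nhds.sub hK (f := fun _ : ℕ => ∫ y in H, |ub y| ∂μ)
    simpa using this
  have hmuBreal : Tendsto (fun n => (μ (B n)).toReal) atTop (𝓝 (μ H).toReal) :=
    (ENNReal.tendsto_toReal hmHfin.ne).comp hmuB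
  have hmHrealpos : (0:ℝ) < (μ H).toReal := ENNReal.toReal_pos hmHpos.ne' hmHfin.ne
  have hcn : Tendsto (fun n => ravg μ (B n) ub) atTop (𝓝 ch) := by
    have h1 : Tendsto (fun n => ((μ (B n)).toReal)⁻¹ * ∫ y in B n, ub y ∂μ) atTop
        (𝓝 (((μ H).toReal)⁻¹ * ∫ y in H, ub y ∂μ)) :=
      (hmuBreal.inv₀ hmHrealpos.ne').mul hIn
    rw [hch]
    have h2 : (fun n => ravg μ (B n) ub) =
        fun n => ((μ (B n)).toReal)⁻¹ * ∫ y in B n, ub y ∂μ := by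
      funext n
      rw [ravg, setAverage_eq, smul_eq_mul, measureReal_def]
    rw [h2]
    exact h1
  -- the Fatou argument on the left-hand side
  set Nn : ℕ → ℝ≥0∞ :=
    fun n => ∫⁻ y in B n, ENNReal.ofReal |ub y - ravg μ (B n) ub| ^ q ∂μ with hNndef
  set Nh : ℝ≥0∞ := ∫⁻ y in H, ENNReal.ofReal |ub y - ch| ^ q ∂μ with hNhdef
  set fs : ℕ → X → ℝ≥0∞ :=
    fun n => (B n).indicator (fun y => ENNReal.ofReal |ub y - ravg μ (B n) ub| ^ q) with hfsdef
  set ν : Measure X := (μ H)⁻¹ • μ.restrict H with hνdef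
  have hub_aem : AEMeasurable ub (μ.restrict H) := huH.1.aemeasurable
  have hfs_aem : ∀ n, AEMeasurable (fs n) ν := by
    intro n
    have hcont : Continuous fun z : ℝ => ENNReal.ofReal |z - ravg μ (B n) ub| ^ q :=
      ENNReal.continuous_rpow_const.comp
        (ENNReal.continuous_ofReal.comp ((continuous_id.sub continuous_const).abs))
    exact ((hcont.measurable.comp_aemeasurable' hub_aem).indicator (hmeasB n)).smul_measure _
  have hpt : ∀ y ∈ H, Tendsto (fun n => fs n y) atTop
      (𝓝 (ENNReal.ofReal |ub y - ch| ^ q)) := by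
    intro y hy
    have hd : dist (ι y) xh < r := Metric.mem_ball.mp hy
    have hev : ∀ᶠ n in atTop, y ∈ B n :=
      (httendsto.eventually (eventually_gt_nhds hd)).mono fun n hn =>
        hTB n (Metric.mem_ball.mpr hn)
    have h3 : Tendsto (fun n => |ub y - ravg μ (B n) ub|) atTop (𝓝 |ub y - ch|) :=
      (tendsto_const_nhds.sub hcn).abs
    have h2 : Tendsto (fun n => ENNReal.ofReal |ub y - ravg μ (B n) ub| ^ q) atTop
        (𝓝 (ENNReal.ofReal |ub y - ch| ^ q)) :=
      (ENNReal.continuous_rpow_const.tendsto _).comp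
        ((ENNReal.continuous_ofReal.tendsto _).comp h3)
    exact h2.congr' (hev.mono fun n hn => (Set.indicator_of_mem hn _).symm)
  have hfsint : ∀ n, (∫⁻ y, fs n y ∂ν) = (μ H)⁻¹ * Nn n := by
    intro n
    rw [hνdef, lintegral_smul_measure]
    congr 1
    rw [hfsdef]
    rw [lintegral_indicator (hmeasB n), Measure.restrict_restrict (hmeasB n),
      Set.inter_eq_self_of_subset_left (hBH n)]
  have hfatou : (μ H)⁻¹ * Nh ≤ liminf (fun n => (μ H)⁻¹ * Nn n) atTop := by
    have hae : (fun y => ENNReal.ofReal |ub y - ch| ^ q) =ᵐ[ν]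
        (fun y => liminf (fun n => fs n y) atTop) := by
      refine Measure.ae_smul_measure ?_ _
      exact ae_restrict_of_forall_mem hmeasH fun y hy => ((hpt y hy).liminf_eq).symm
    have h1 : (∫⁻ y, ENNReal.ofReal |ub y - ch| ^ q ∂ν) = (μ H)⁻¹ * Nh := by
      rw [hνdef, lintegral_smul_measure, smul_eq_mul]
    calc (μ H)⁻¹ * Nh = ∫⁻ y, ENNReal.ofReal |ub y - ch| ^ q ∂ν := h1.symm
      _ = ∫⁻ y, liminf (fun n => fs n y) atTop ∂ν := lintegral_congr_ae hae
      _ ≤ liminf (fun n => ∫⁻ y, fs n y ∂ν) atTop := lintegral_liminf_le' hfs_aem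
      _ = liminf (fun n => (μ H)⁻¹ * Nn n) atTop := by
          congr 1
          funext n
          exact hfsint n
  -- the per-n chain of inequalities
  set R' : ℕ → ℝ≥0∞ :=
    fun n => ENNReal.ofReal (CPI * s n) * (Ix / μ (S n)) ^ (1/p) with hR'def
  have hpern : ∀ n, (μ H)⁻¹ * Nn n ≤ R' n ^ q := by
    intro n
    have h1 : (μ H)⁻¹ * Nn n ≤ (μ (B n))⁻¹ * Nn n :=
      mul_le_mul_left (ENNReal.inv_le_inv.mpr (measure_mono (hBH n))) _
    have h2 : (μ (B n))⁻¹ * Nn n =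
        avg μ (B n) fun y => ENNReal.ofReal |ub y - ravg μ (B n) ub| ^ q := by
      rw [avg, ENNReal.div_eq_inv_mul]
    have h3 : (avg μ (B n) fun y => ENNReal.ofReal |ub y - ravg μ (B n) ub| ^ q) =
        ((avg μ (B n) fun y => ENNReal.ofReal |ub y - ravg μ (B n) ub| ^ q) ^ (1/q)) ^ q := by
      rw [← ENNReal.rpow_mul, one_div, inv_mul_cancel₀ hq0.ne', ENNReal.rpow_one]
    have h5 : (avg μ (LB n) fun y => gb y ^ p) ^ (1/p) ≤ (Ix / μ (S n)) ^ (1/p) := by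
      refine ENNReal.rpow_le_rpow ?_ (by positivity)
      rw [avg]
      exact ENNReal.div_le_div (lintegral_mono_set (hLBHL n)) (measure_mono (hSLB n))
    calc (μ H)⁻¹ * Nn n ≤ (μ (B n))⁻¹ * Nn n := h1
      _ = avg μ (B n) fun y => ENNReal.ofReal |ub y - ravg μ (B n) ub| ^ q := h2
      _ = ((avg μ (B n) fun y => ENNReal.ofReal |ub y - ravg μ (B n) ub| ^ q) ^ (1/q)) ^ q := h3
      _ ≤ (ENNReal.ofReal (CPI * s n) * (avg μ (LB n) fun y => gb y ^ p) ^ (1/p)) ^ q :=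
          ENNReal.rpow_le_rpow (hPI n) hq0.le
      _ ≤ R' n ^ q :=
          ENNReal.rpow_le_rpow (mul_le_mul_right h5 _) hq0.le
  -- identification of the goal
  have hgoalR : (avg (μ.map ι) (Metric.ball xh (lam * r)) fun y => g y ^ p) = Ix / μ HL := by
    rw [avg, hIx, hmap]
  have hgoalL : (avg (μ.map ι) (Metric.ball xh r)
      fun y => ENNReal.ofReal |u y - ravg (μ.map ι) (Metric.ball xh r) u| ^ q) =
      (μ H)⁻¹ * Nh := by
    rw [avg, hmap, ENNReal.div_eq_inv_mul]
    congr 1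
    have haem : AEMeasurable (fun z => ENNReal.ofReal |u z - ch| ^ q)
        ((μ.restrict H).map ι) := by
      rw [← hrmap r]
      have hcont : Continuous fun z : ℝ => ENNReal.ofReal |z - ch| ^ q :=
        ENNReal.continuous_rpow_const.comp
          (ENNReal.continuous_ofReal.comp ((continuous_id.sub continuous_const).abs))
      exact hcont.measurable.comp_aemeasurable' huball.1.aemeasurable
    rw [← hchdef, hrmap r, lintegral_map' haem hmι.aemeasurable]
  rw [hgoalL, hgoalR]
  -- case `Ix = ⊤`
  rcases eq_or_ne Ix ⊤ with hIxtop | hIxne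
  · have hdivtop : Ix / μ HL = ⊤ := ENNReal.div_eq_top.mpr (Or.inr ⟨hIxtop, hMfin.ne⟩)
    have hne0 : ENNReal.ofReal (CPI * r) ≠ 0 :=
      (ENNReal.ofReal_pos.mpr (by positivity)).ne'
    rw [hdivtop, ENNReal.top_rpow_of_pos (by positivity), ENNReal.mul_top hne0]
    exact le_top
  · -- convergence of the right-hand sides
    have hmuSi : Tendsto (fun n => (μ (S n))⁻¹) atTop (𝓝 (μ HL)⁻¹) :=
      ENNReal.tendsto_inv_iff.mpr hmuS
    have hdivt : Tendsto (fun n => Ix / μ (S n)) atTop (𝓝 (Ix / μ HL)) := by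
      simp only [div_eq_mul_inv]
      exact ENNReal.Tendsto.const_mul hmuSi (Or.inr hIxne)
    have hrpt : Tendsto (fun n => (Ix / μ (S n)) ^ (1/p)) atTop
        (𝓝 ((Ix / μ HL) ^ (1/p))) :=
      (ENNReal.continuous_rpow_const.tendsto _).comp hdivt
    have hofR : Tendsto (fun n => ENNReal.ofReal (CPI * s n)) atTop
        (𝓝 (ENNReal.ofReal (CPI * r))) :=
      (ENNReal.continuous_ofReal.tendsto _).comp (hstendsto.const_mul CPI)
    have hR't : Tendsto R' atTop
        (𝓝 (ENNReal.ofReal (CPI * r) * (Ix / μ HL) ^ (1/p))) :=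
      ENNReal.Tendsto.mul hofR
        (Or.inl (ENNReal.ofReal_pos.mpr (by positivity)).ne') hrpt
        (Or.inr ENNReal.ofReal_ne_top)
    have hR'qt : Tendsto (fun n => R' n ^ q) atTop
        (𝓝 ((ENNReal.ofReal (CPI * r) * (Ix / μ HL) ^ (1/p)) ^ q)) :=
      (ENNReal.continuous_rpow_const.tendsto _).comp hR't
    have hliminf : (μ H)⁻¹ * Nh ≤
        (ENNReal.ofReal (CPI * r) * (Ix / μ HL) ^ (1/p)) ^ q := by
      calc (μ H)⁻¹ * Nh ≤ liminf (fun n => (μ H)⁻¹ * Nn n) atTop := hfatou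
        _ ≤ liminf (fun n => R' n ^ q) atTop :=
            liminf_le_liminf (Filter.Eventually.of_forall hpern)
        _ = _ := hR'qt.liminf_eq
    calc ((μ H)⁻¹ * Nh) ^ (1/q) ≤
        (((ENNReal.ofReal (CPI * r) * (Ix / μ HL) ^ (1/p)) ^ q) ^ (1/q)) :=
          ENNReal.rpow_le_rpow hliminf (by positivity)
      _ = ENNReal.ofReal (CPI * r) * (Ix / μ HL) ^ (1/p) := by
          rw [← ENNReal.rpow_mul, mul_one_div, div_self hq0.ne', ENNReal.rpow_one]

end Paper
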